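/- Let f : [0,1] → [-1,1] be a non-constant continuous map with f(0) = 0. Then f has at least one departure, i.e., there exists x > 0 with f(x) ∉ f([0,x)). -/
import Mathlib


open Set

/-- A positive radial departure of `f`. -/
def PosRD (f : ℝ → ℝ) (x₁ x₂ : ℝ) : Prop :=
  -1 ≤ x₁ ∧ x₁ < 0 ∧ 0 < x₂ ∧ x₂ ≤ 1 ∧ f '' Ioo x₁ x₂ = Ioo (f x₁) (f x₂)

/-- A negative radial departure of `f`. -/
def NegRD (f : ℝ → ℝ) (x₁ x₂ : ℝ) : Prop :=
  -1 ≤ x₁ ∧ x₁ < 0 ∧ 0 < x₂ ∧ x₂ ≤ 1 ∧ f '' Ioo x₁ x₂ = Ioo (f x₂) (f x₁)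

/-- A radial departure of `f` (of either orientation). -/
def RadialDeparture (f : ℝ → ℝ) (x₁ x₂ : ℝ) : Prop := PosRD f x₁ x₂ ∨ NegRD f x₁ x₂

/-- A (right) departure of `g` (viewed as a map on `[0,1]`). -/
def Departure (g : ℝ → ℝ) (x : ℝ) : Prop := 0 < x ∧ x ≤ 1 ∧ g x ∉ g '' Ico 0 x

/-- A left departure of `g` (viewed as a map on `[-1,0]`). -/
def LeftDeparture (g : ℝ → ℝ) (x : ℝ) : Prop := -1 ≤ x ∧ x < 0 ∧ g x ∉ g '' Ioc x 0

/-- A (right) contour point of `g`: a departure `α` such that every departure past `α`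
is preceded (within `(α, x]`) by a departure of orientation opposite to that of `α`. -/
def ContourPoint (g : ℝ → ℝ) (α : ℝ) : Prop :=
  Departure g α ∧
    ∀ x, Departure g x → α < x → ∃ y, Departure g y ∧ α < y ∧ y ≤ x ∧ g α * g y < 0

/-- `[ym, yp]` is a liftable range for `t`. -/
def LiftableRange (t : ℝ → ℝ) (ym yp : ℝ) : Prop :=
  -1 ≤ ym ∧ ym ≤ 0 ∧ 0 ≤ yp ∧ yp ≤ 1 ∧
  t '' Icc ym 0 ⊆ t '' Icc 0 1 ∧
  ¬ ∃ y₁ y₂, RadialDeparture t y₁ y₂ ∧ ym ≤ y₁ ∧ yp < y₂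

/-- `f` is linear (affine) on the interval `[a,b]`. -/
def LinearOn (f : ℝ → ℝ) (a b : ℝ) : Prop :=
  ∀ x ∈ Icc a b, (b - a) * f x = (b - x) * f a + (x - a) * f b

/-- `f` is piecewise-linear on `[-1,1]`. -/
def PiecewiseLinear (f : ℝ → ℝ) : Prop :=
  ∃ n : ℕ, ∃ c : ℕ → ℝ, c 0 = -1 ∧ c n = 1 ∧ (∀ i < n, c i < c (i + 1)) ∧
    ∀ i < n, LinearOn f (c i) (c (i + 1))

/-- `t` is the contour factor of `g` (for maps on `[0,1]`): the contour points of `g`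
are `0 = α₀ < α₁ < ⋯ < α_n`, `t (i/n) = g (α i)`, and `t` is linear in between. -/
def IsContourFactor (g t : ℝ → ℝ) : Prop :=
  ∃ n : ℕ, 0 < n ∧ ∃ α : ℕ → ℝ, α 0 = 0 ∧ (∀ i < n, α i < α (i + 1)) ∧
    (∀ x, ContourPoint g x ↔ ∃ i, 1 ≤ i ∧ i ≤ n ∧ x = α i) ∧
    (∀ i ≤ n, t ((i : ℝ) / (n : ℝ)) = g (α i)) ∧
    (∀ i < n, LinearOn t ((i : ℝ) / (n : ℝ)) (((i : ℝ) + 1) / (n : ℝ)))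

/-- `t` is the radial contour factor of `f`: its restriction to `[0,1]` is the contour
factor of `f|[0,1]`, and `t|[-1,0] ∘ r` is the contour factor of `f|[-1,0] ∘ r`,
where `r x = -x`. -/
def IsRadialContourFactor (f t : ℝ → ℝ) : Prop :=
  IsContourFactor f t ∧ IsContourFactor (fun x => f (-x)) (fun x => t (-x))

/-- `f` is non-constant on each of `[0,1]` and `[-1,0]`. -/
def NonConstSides (f : ℝ → ℝ) : Prop :=
  (∃ a ∈ Icc (0:ℝ) 1, ∃ b ∈ Icc (0:ℝ) 1, f a ≠ f b) ∧
  (∃ a ∈ Icc (-1:ℝ) 0, ∃ b ∈ Icc (-1:ℝ) 0, f a ≠ f b)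

theorem stmt4 (f : ℝ → ℝ) (hf : Continuous f)
    (hmap : MapsTo f (Icc (0:ℝ) 1) (Icc (-1:ℝ) 1)) (hf0 : f 0 = 0)
    (hnc : ∃ a ∈ Icc (0:ℝ) 1, ∃ b ∈ Icc (0:ℝ) 1, f a ≠ f b) :
    ∃ x, Departure f x := by
  -- Let |f| attain its maximum M on [0,1], and take the least point attaining M.
  obtain ⟨xm, hxm, hmax⟩ := (isCompact_Icc : IsCompact (Icc (0:ℝ) 1)).exists_isMaxOn ⟨0, by norm_num, by norm_num⟩
    (continuous_abs.comp hf).continuousOn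
  set M := |f xm| with hM
  have hMpos : 0 < M := by
    obtain ⟨a, ha, b, hb, hab⟩ := hnc
    rcases eq_or_ne (f a) 0 with h | h
    · have := hmax hb
      have : |f b| ≤ M := this
      have hb0 : f b ≠ 0 := by rw [h] at hab; exact fun e => hab e.symm
      exact lt_of_lt_of_le (abs_pos.mpr hb0) this
    · exact lt_of_lt_of_le (abs_pos.mpr h) (hmax ha)
  set S : Set ℝ := Icc 0 1 ∩ (fun x => |f x|) ⁻¹' {M} with hS
  have hSclosed : IsClosed S :=
    isClosed_Icc.inter (isClosed_singleton.preimage (continuous_abs.comp hf))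
  have hSne : S.Nonempty := ⟨xm, hxm, rfl⟩
  have hSbdd : BddBelow S := ⟨0, fun x hx => hx.1.1⟩
  have hmem : sInf S ∈ S := hSclosed.csInf_mem hSne hSbdd
  set x₀ := sInf S with hx₀
  refine ⟨x₀, ?_, hmem.1.2, ?_⟩
  · rcases lt_or_eq_of_le hmem.1.1 with h | h
    · exact h
    · exfalso
      have : |f x₀| = M := hmem.2
      rw [← h, hf0] at this
      simp at this
      exact hMpos.ne this
  · rintro ⟨y, ⟨hy0, hyx⟩, hfy⟩
    have hyS : y ∈ S := by
      refine ⟨⟨hy0, hyx.le.trans hmem.1.2⟩, ?_⟩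
      simp only [mem_preimage, mem_singleton_iff]
      rw [hfy]; exact hmem.2
    exact absurd (csInf_le hSbdd hyS) (not_le.mpr hyx)
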